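/- For every integer n ≥ 1 and all z, the twisted HR polynomial P_n(z; α+1, β−1) satisfies both: (i) P_n(z; α+1, β−1) = P_n(z) + b_n·P_{n−1}(z), and (ii) z·P_n(z; α+1, β−1) = P_{n+1}(z) + d_n·P_n(z). -/
import Mathlib


open Finset

/-- Pochhammer symbol `(a)_k = a (a+1) ⋯ (a+k-1)`. -/
noncomputable def poch (a : ℝ) (k : ℕ) : ℝ := ∏ i ∈ Finset.range k, (a + (i : ℝ))

/-- The Hendriksen–van Rossum polynomial `P_n(z; α, β)`. -/
noncomputable def HR (α β : ℝ) (n : ℕ) (z : ℝ) : ℝ :=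
  (poch β n / poch (α + 1) n) *
    ∑ k ∈ Finset.range (n + 1),
      poch (-(n : ℝ)) k * poch (α + 1) k /
          (poch (1 - β - (n : ℝ)) k * (Nat.factorial k : ℝ)) * z ^ k

/-- `d_m(α,β) = −(m+β)/(m+α+1)`. -/
noncomputable def dco (α β m : ℝ) : ℝ := -(m + β) / (m + α + 1)

/-- `b_m(α,β) = −m(m+α+β)/((m+α)(m+α+1))`. -/
noncomputable def bco (α β m : ℝ) : ℝ := -(m * (m + α + β)) / ((m + α) * (m + α + 1))

lemma poch_zero (a : ℝ) : poch a 0 = 1 := Finset.prod_range_zero _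

lemma poch_succ (a : ℝ) (k : ℕ) : poch a (k+1) = poch a k * (a + k) := by
  simp [poch, Finset.prod_range_succ]

lemma poch_shift (a : ℝ) (k : ℕ) : poch a (k+1) = a * poch (a+1) k := by
  rw [poch, Finset.prod_range_succ', poch]
  simp only [Nat.cast_add, Nat.cast_one, Nat.cast_zero, add_zero]
  rw [mul_comm]
  congr 1
  exact Finset.prod_congr rfl fun i _ => by ring

lemma poch_ne_zero (a : ℝ) (h : ∀ i : ℕ, a + i ≠ 0) (k : ℕ) : poch a k ≠ 0 :=
  Finset.prod_ne_zero_iff.mpr fun i _ => h i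

lemma poch_top (m : ℕ) : poch (-(m:ℝ)) (m+1) = 0 :=
  Finset.prod_eq_zero (Finset.self_mem_range_succ m) (by simp)

/-- The coefficient of `z^k` in `HR α β n z`. -/
noncomputable def cc (α β : ℝ) (n k : ℕ) : ℝ :=
  poch β n / poch (α + 1) n *
    (poch (-(n : ℝ)) k * poch (α + 1) k /
      (poch (1 - β - (n : ℝ)) k * (Nat.factorial k : ℝ)))

lemma HR_sum (α β : ℝ) (n : ℕ) (z : ℝ) :
    HR α β n z = ∑ k ∈ Finset.range (n+1), cc α β n k * z ^ k := by
  rw [HR, Finset.mul_sum]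
  refine Finset.sum_congr rfl fun k _ => ?_
  unfold cc; ring

lemma cc_top (α β : ℝ) (n : ℕ) : cc α β n (n+1) = 0 := by
  unfold cc; rw [poch_top]; ring

section keys
variable (α β : ℝ)
  (hα : ∀ m : ℤ, α ≠ (m : ℝ)) (hβ : ∀ m : ℤ, β ≠ (m : ℝ))

include hα hβ in
set_option maxHeartbeats 2000000 in
lemma key1 (m k : ℕ) :
    cc (α+1) (β-1) (m+1) k = cc α β (m+1) k + bco α β ((m:ℝ)+1) * cc α β m k := by
  -- nonzero facts
  have hα1 : α + 1 ≠ 0 := fun h => hα (-1) (by push_cast; linarith)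
  have hαm : α + 1 + m ≠ 0 := fun h => hα (-1 - m) (by push_cast; linarith)
  have hαm2 : (m:ℝ) + 1 + α ≠ 0 := fun h => hα (-1 - m) (by push_cast; linarith)
  have hαm3 : (m:ℝ) + 1 + α + 1 ≠ 0 := fun h => hα (-2 - m) (by push_cast; linarith)
  have hαm4 : α + 1 + ((m:ℝ)+1) ≠ 0 := fun h => hα (-2 - m) (by push_cast; linarith)
  have hb0 : 1 - β - ((m:ℝ)+1) ≠ 0 := fun h => hβ (-(m:ℤ)) (by push_cast; linarith)
  have hm1b : (-1 + -(m:ℝ)) ≠ 0 := by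
    intro h; have : (m:ℝ) ≥ 0 := Nat.cast_nonneg m; linarith
  have hm1 : -((m:ℝ)+1) ≠ 0 := neg_ne_zero.mpr (by positivity)
  have hbk : (1:ℝ) - β - ((m:ℝ)+1) + k ≠ 0 := fun h => hβ (-(m:ℤ) + k) (by push_cast; linarith)
  have hfk : (Nat.factorial k : ℝ) ≠ 0 := by positivity
  -- rewrites
  have hA : poch (β-1) (m+1) = (β-1) * poch β m := by
    rw [poch_shift, show β - 1 + 1 = β from by ring]
  have hB : poch (α+1+1) (m+1) = poch (α+1) m * ((α+1+m) * (α+1+(m+1))) / (α+1) := by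
    rw [eq_div_iff hα1]
    have h1 := poch_shift (α+1) (m+1)
    have h2 := poch_succ (α+1) (m+1)
    have h3 := poch_succ (α+1) m
    push_cast at h1 h2 h3 ⊢
    linear_combination h2 - h1 + (α + 1 + ((m:ℝ) + 1)) * h3
  have hD : poch (α+1+1) k = poch (α+1) k * (α+1+k) / (α+1) := by
    rw [eq_div_iff hα1]
    have h1 := poch_shift (α+1) k
    have h2 := poch_succ (α+1) k
    linarith [h1, h2]
  have hE : poch (1-(β-1)-((m:ℝ)+1)) k = poch (1-β-(m:ℝ)) k := by
    rw [show (1:ℝ)-(β-1)-((m:ℝ)+1) = 1-β-(m:ℝ) from by ring]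
  have hU : poch (1-β-((m:ℝ)+1)) k
      = (1-β-((m:ℝ)+1)) * poch (1-β-(m:ℝ)) k / (1-β-((m:ℝ)+1)+k) := by
    rw [eq_div_iff hbk]
    have h1 := poch_shift (1-β-((m:ℝ)+1)) k
    have h2 := poch_succ (1-β-((m:ℝ)+1)) k
    rw [show (1-β-((m:ℝ)+1))+1 = 1-β-(m:ℝ) from by ring] at h1
    linarith [h1, h2]
  have hC : poch (-(m:ℝ)) k = poch (-((m:ℝ)+1)) k * (-((m:ℝ)+1)+k) / (-((m:ℝ)+1)) := by
    rw [eq_div_iff hm1]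
    have h1 := poch_shift (-((m:ℝ)+1)) k
    have h2 := poch_succ (-((m:ℝ)+1)) k
    rw [show -((m:ℝ)+1)+1 = -(m:ℝ) from by ring] at h1
    linarith [h1, h2]
  have hβn : poch β (m+1) = poch β m * (β + m) := poch_succ β m
  have hαn : poch (α+1) (m+1) = poch (α+1) m * (α+1+m) := poch_succ (α+1) m
  have h1 : poch (α+1) m ≠ 0 :=
    poch_ne_zero _ (fun i h => hα (-1 - i) (by push_cast; linarith)) m
  have h2 : poch (1 - β - (m:ℝ)) k ≠ 0 :=
    poch_ne_zero _ (fun i h => hβ (1 - m + i) (by push_cast; linarith)) k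
  have h3 : poch β m ≠ 0 :=
    poch_ne_zero _ (fun i h => hβ (-i) (by push_cast; linarith)) m
  unfold cc bco
  push_cast
  rw [hA, hB, hD, hE, hU, hC, hβn, hαn]
  field_simp [hα1, hαm, hαm2, hαm3, hαm4, hb0, hm1, hm1b, hbk, h1, h2, h3, hfk]
  ring

include hα hβ in
set_option maxHeartbeats 2000000 in
lemma key2 (m k : ℕ) :
    cc (α+1) (β-1) (m+1) k
      = cc α β (m+2) (k+1) + dco α β ((m:ℝ)+1) * cc α β (m+1) (k+1) := by
  -- nonzero facts
  have hα1 : α + 1 ≠ 0 := fun h => hα (-1) (by push_cast; linarith)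
  have hαm : α + 1 + m ≠ 0 := fun h => hα (-1 - m) (by push_cast; linarith)
  have hαm3 : (m:ℝ) + 1 + α + 1 ≠ 0 := fun h => hα (-2 - m) (by push_cast; linarith)
  have hαm4 : α + 1 + ((m:ℝ)+1) ≠ 0 := fun h => hα (-2 - m) (by push_cast; linarith)
  have hb0 : 1 - β - ((m:ℝ)+1) ≠ 0 := fun h => hβ (-(m:ℤ)) (by push_cast; linarith)
  have hb2 : 1 - β - ((m:ℝ)+2) ≠ 0 := fun h => hβ (-(m:ℤ) - 1) (by push_cast; linarith)
  have hbk : (1:ℝ) - β - ((m:ℝ)+1) + k ≠ 0 := fun h => hβ (-(m:ℤ) + k) (by push_cast; linarith)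
  have hk1 : ((k:ℝ)+1) ≠ 0 := by positivity
  have hfk : (Nat.factorial k : ℝ) ≠ 0 := by positivity
  -- rewrites
  have hA : poch (β-1) (m+1) = (β-1) * poch β m := by
    rw [poch_shift, show β - 1 + 1 = β from by ring]
  have hB : poch (α+1+1) (m+1) = poch (α+1) m * ((α+1+m) * (α+1+(m+1))) / (α+1) := by
    rw [eq_div_iff hα1]
    have h1 := poch_shift (α+1) (m+1)
    have h2 := poch_succ (α+1) (m+1)
    have h3 := poch_succ (α+1) m
    push_cast at h1 h2 h3 ⊢
    linear_combination h2 - h1 + (α + 1 + ((m:ℝ) + 1)) * h3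
  have hD : poch (α+1+1) k = poch (α+1) k * (α+1+k) / (α+1) := by
    rw [eq_div_iff hα1]
    have h1 := poch_shift (α+1) k
    have h2 := poch_succ (α+1) k
    linarith [h1, h2]
  have hE : poch (1-(β-1)-((m:ℝ)+1)) k = poch (1-β-(m:ℝ)) k := by
    rw [show (1:ℝ)-(β-1)-((m:ℝ)+1) = 1-β-(m:ℝ) from by ring]
  have hU : poch (1-β-((m:ℝ)+1)) k
      = (1-β-((m:ℝ)+1)) * poch (1-β-(m:ℝ)) k / (1-β-((m:ℝ)+1)+k) := by
    rw [eq_div_iff hbk]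
    have h1 := poch_shift (1-β-((m:ℝ)+1)) k
    have h2 := poch_succ (1-β-((m:ℝ)+1)) k
    rw [show (1-β-((m:ℝ)+1))+1 = 1-β-(m:ℝ) from by ring] at h1
    linarith [h1, h2]
  have hβn : poch β (m+1) = poch β m * (β + m) := poch_succ β m
  have hαn : poch (α+1) (m+1) = poch (α+1) m * (α+1+m) := poch_succ (α+1) m
  have hβn2 : poch β (m+2) = poch β m * (β + m) * (β + (m+1)) := by
    have h1 := poch_succ β (m+1)
    push_cast at h1
    rw [h1, hβn]
  have hαn2 : poch (α+1) (m+2) = poch (α+1) m * (α+1+m) * (α+1+(m+1)) := by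
    have h1 := poch_succ (α+1) (m+1)
    push_cast at h1
    rw [h1, hαn]
  have hN2 : poch (-((m:ℝ)+2)) (k+1) = (-((m:ℝ)+2)) * poch (-((m:ℝ)+1)) k := by
    rw [poch_shift, show -((m:ℝ)+2)+1 = -((m:ℝ)+1) from by ring]
  have hN1 : poch (-((m:ℝ)+1)) (k+1) = poch (-((m:ℝ)+1)) k * (-((m:ℝ)+1)+k) :=
    poch_succ _ k
  have hQ : poch (α+1) (k+1) = poch (α+1) k * (α+1+k) := poch_succ _ k
  have hW2 : poch (1-β-((m:ℝ)+2)) (k+1) = (1-β-((m:ℝ)+2)) * poch (1-β-((m:ℝ)+1)) k := by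
    rw [poch_shift, show (1-β-((m:ℝ)+2))+1 = 1-β-((m:ℝ)+1) from by ring]
  have hW1 : poch (1-β-((m:ℝ)+1)) (k+1)
      = poch (1-β-((m:ℝ)+1)) k * (1-β-((m:ℝ)+1)+k) := poch_succ _ k
  have h1 : poch (α+1) m ≠ 0 :=
    poch_ne_zero _ (fun i h => hα (-1 - i) (by push_cast; linarith)) m
  have h2 : poch (1 - β - (m:ℝ)) k ≠ 0 :=
    poch_ne_zero _ (fun i h => hβ (1 - m + i) (by push_cast; linarith)) k
  have h3 : poch β m ≠ 0 :=
    poch_ne_zero _ (fun i h => hβ (-i) (by push_cast; linarith)) m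
  unfold cc dco
  push_cast [Nat.factorial_succ]
  rw [hA, hB, hD, hE, hβn, hαn, hβn2, hαn2, hN2, hN1, hQ, hW2, hW1, hU]
  field_simp [hα1, hαm, hαm3, hαm4, hb0, hb2, hbk, hk1, h1, h2, h3, hfk]
  ring

include hα hβ in
lemma key0 (m : ℕ) :
    (0:ℝ) = cc α β (m+2) 0 + dco α β ((m:ℝ)+1) * cc α β (m+1) 0 := by
  have hα1 : α + 1 ≠ 0 := fun h => hα (-1) (by push_cast; linarith)
  have hαm : α + 1 + m ≠ 0 := fun h => hα (-1 - m) (by push_cast; linarith)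
  have hαm3 : (m:ℝ) + 1 + α + 1 ≠ 0 := fun h => hα (-2 - m) (by push_cast; linarith)
  have hαm4 : α + 1 + ((m:ℝ)+1) ≠ 0 := fun h => hα (-2 - m) (by push_cast; linarith)
  have hβn : poch β (m+1) = poch β m * (β + m) := poch_succ β m
  have hαn : poch (α+1) (m+1) = poch (α+1) m * (α+1+m) := poch_succ (α+1) m
  have hβn2 : poch β (m+2) = poch β m * (β + m) * (β + (m+1)) := by
    have h1 := poch_succ β (m+1); push_cast at h1; rw [h1, hβn]
  have hαn2 : poch (α+1) (m+2) = poch (α+1) m * (α+1+m) * (α+1+(m+1)) := by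
    have h1 := poch_succ (α+1) (m+1); push_cast at h1; rw [h1, hαn]
  have h1 : poch (α+1) m ≠ 0 :=
    poch_ne_zero _ (fun i h => hα (-1 - i) (by push_cast; linarith)) m
  have h3 : poch β m ≠ 0 :=
    poch_ne_zero _ (fun i h => hβ (-i) (by push_cast; linarith)) m
  unfold cc dco
  simp only [poch_zero, Nat.factorial_zero]
  push_cast
  rw [hβn, hαn, hβn2, hαn2]
  field_simp [hα1, hαm, hαm3, hαm4, h1, h3]
  ring

end keys

/-- For `n ≥ 1`: (i) `P_n(z; α+1, β−1) = P_n(z) + b_n P_{n−1}(z)` and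
(ii) `z P_n(z; α+1, β−1) = P_{n+1}(z) + d_n P_n(z)`. -/
theorem stmt11 (α β : ℝ)
    (hα : ∀ m : ℤ, α ≠ (m : ℝ)) (hβ : ∀ m : ℤ, β ≠ (m : ℝ))
    (hαβ : ∀ m : ℤ, α + β ≠ (m : ℝ))
    (n : ℕ) (hn : 1 ≤ n) (z : ℝ) :
    HR (α + 1) (β - 1) n z = HR α β n z + bco α β (n : ℝ) * HR α β (n - 1) z
    ∧ z * HR (α + 1) (β - 1) n z = HR α β (n + 1) z + dco α β (n : ℝ) * HR α β n z := by
  obtain ⟨m, rfl⟩ : ∃ m, n = m + 1 := ⟨n - 1, (Nat.succ_pred_eq_of_pos hn).symm⟩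
  constructor
  · rw [HR_sum, HR_sum, show m + 1 - 1 = m from rfl, HR_sum]
    have hext : ∑ k ∈ Finset.range (m+1), cc α β m k * z ^ k
        = ∑ k ∈ Finset.range (m+2), cc α β m k * z ^ k := by
      rw [Finset.sum_range_succ (fun k => cc α β m k * z ^ k) (m+1), cc_top]; ring
    rw [hext, Finset.mul_sum, ← Finset.sum_add_distrib]
    refine Finset.sum_congr rfl fun k _ => ?_
    have := key1 α β hα hβ m k
    push_cast
    rw [this]; ring
  · rw [HR_sum, HR_sum, HR_sum]
    have hext : ∑ k ∈ Finset.range (m+2), cc α β (m+1) k * z ^ k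
        = ∑ k ∈ Finset.range (m+3), cc α β (m+1) k * z ^ k := by
      have h := cc_top α β (m+1)
      rw [Finset.sum_range_succ (fun k => cc α β (m+1) k * z ^ k) (m+2),
        show m+1+1 = m+2 from rfl] at *
      rw [h]; ring
    rw [hext, Finset.mul_sum, Finset.mul_sum, ← Finset.sum_add_distrib,
      Finset.sum_range_succ' (fun j => cc α β (m+1+1) j * z ^ j
        + dco α β (↑(m+1)) * (cc α β (m+1) j * z ^ j)) (m+2)]
    have h0 : cc α β (m+1+1) 0 * z ^ 0 + dco α β (↑(m+1)) * (cc α β (m+1) 0 * z ^ 0) = 0 := by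
      have := key0 α β hα hβ m
      push_cast
      push_cast at this
      simp only [pow_zero, mul_one]
      linarith [this]
    rw [h0, add_zero]
    refine Finset.sum_congr rfl fun k _ => ?_
    have hk2 := key2 α β hα hβ m k
    simp only [show m+1+1 = m+2 from rfl]
    push_cast
    push_cast at hk2
    rw [hk2]; ring
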